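/- Let a ∈ S_n^+ be a positive-semidefinite n×n matrix partitioned into blocks a_{ij} = e_i a e_j' (i,j = 1,2) with a_{11} of rank k > 0 and reduced eigen-decomposition a_{11} = u λ u'. Define σ_{i1} = a_{i1} u λ^{-1/2}, α = a_{22} − σ_{21}σ_{21}', σ = [[σ_{11}, 0],[σ_{21}, I_{n_2}]], and a^W = diag(I_k, α). Then α is positive-semidefinite and a = σ a^W σ'. -/

import Mathlib

open Matrix

/-- If `a` is PSD and `cᵀ a c = 0` then `a * c = 0`. -/
private lemma psd_mul_eq_zero {N P : Type*} [Fintype N] [Fintype P] [DecidableEq N]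
    {a : Matrix N N ℝ} (ha : a.PosSemidef) (c : Matrix N P ℝ)
    (h : cᵀ * a * c = 0) : a * c = 0 := by
  ext i j
  have hx := (ha.dotProduct_mulVec_zero_iff (fun l => c l j)).mp (by
    have := congrFun (congrFun h j) j
    rw [Matrix.zero_apply] at this
    rw [← this]
    simp only [Matrix.mul_apply, dotProduct, mulVec, Finset.sum_mul, Finset.mul_sum,
      star_trivial, transpose_apply, Pi.star_apply, Matrix.zero_apply]
    rw [Finset.sum_comm]
    simp only [mul_assoc, mul_comm, mul_left_comm])
  have := congrFun hx i
  simpa [mulVec, dotProduct, Matrix.mul_apply] using this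

theorem posSemidef_block_factorization
    {n1 n2 k : ℕ} (hk : 0 < k)
    (a : Matrix (Fin n1 ⊕ Fin n2) (Fin n1 ⊕ Fin n2) ℝ) (ha : a.PosSemidef)
    (u : Matrix (Fin n1) (Fin k) ℝ) (d : Fin k → ℝ)
    (hd : ∀ i, 0 < d i) (hu : uᵀ * u = 1)
    (ha11 : a.toBlocks₁₁ = u * Matrix.diagonal d * uᵀ)
    (hrank : (a.toBlocks₁₁).rank = k) :
    letI lih : Matrix (Fin k) (Fin k) ℝ := Matrix.diagonal fun i => (Real.sqrt (d i))⁻¹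
    letI σ11 := a.toBlocks₁₁ * u * lih
    letI σ21 := a.toBlocks₂₁ * u * lih
    letI α := a.toBlocks₂₂ - σ21 * σ21ᵀ
    α.PosSemidef ∧
      a = (Matrix.fromBlocks σ11 0 σ21 (1 : Matrix (Fin n2) (Fin n2) ℝ)) *
            (Matrix.fromBlocks (1 : Matrix (Fin k) (Fin k) ℝ) 0 0 α) *
            (Matrix.fromBlocks σ11 0 σ21 (1 : Matrix (Fin n2) (Fin n2) ℝ))ᵀ := by
  set lih : Matrix (Fin k) (Fin k) ℝ := Matrix.diagonal fun i => (Real.sqrt (d i))⁻¹ with hlih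
  set σ11 := a.toBlocks₁₁ * u * lih with hσ11d
  set σ21 := a.toBlocks₂₁ * u * lih with hσ21d
  set α := a.toBlocks₂₂ - σ21 * σ21ᵀ with hαd
  set a11 := a.toBlocks₁₁ with ha11def
  set a12 := a.toBlocks₁₂ with ha12def
  set a21 := a.toBlocks₂₁ with ha21def
  set a22 := a.toBlocks₂₂ with ha22def
  have hdne : ∀ i, Real.sqrt (d i) ≠ 0 := fun i =>
    ne_of_gt (Real.sqrt_pos.mpr (hd i))
  -- a is symmetric
  have hsym : aᵀ = a := by
    have := ha.isHermitian
    exact (show a.IsSymm by simpa using this)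
  have ha12 : a12 = a21ᵀ := by
    ext i j
    show a (Sum.inl i) (Sum.inr j) = a (Sum.inr j) (Sum.inl i)
    conv_lhs => rw [← hsym]
    rfl
  -- the projector fact : a21 * (u * uᵀ) = a21 and a11 * (u * uᵀ) = a11
  have key : a * Matrix.fromBlocks (1 - u * uᵀ) 0 0 0 = 0 := by
    apply psd_mul_eq_zero ha
    have hp : a11 * (1 - u * uᵀ) = 0 := by
      rw [ha11, Matrix.mul_sub, Matrix.mul_one, Matrix.mul_assoc (u * Matrix.diagonal d),
        ← Matrix.mul_assoc uᵀ, hu, Matrix.one_mul, sub_self]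
    have hfb : a = Matrix.fromBlocks a11 a12 a21 a22 := (fromBlocks_toBlocks a).symm
    have hpt : (1 - u * uᵀ)ᵀ = 1 - u * uᵀ := by
      simp [transpose_sub, transpose_mul]
    rw [hfb, fromBlocks_transpose, fromBlocks_multiply, fromBlocks_multiply]
    simp only [hpt, Matrix.mul_zero, Matrix.zero_mul, add_zero, zero_add,
      transpose_zero]
    rw [Matrix.mul_assoc, hp, Matrix.mul_zero]
    simp [fromBlocks_zero]
  have hfb : a = Matrix.fromBlocks a11 a12 a21 a22 := (fromBlocks_toBlocks a).symm
  have key' : Matrix.fromBlocks (a11 * (1 - u * uᵀ)) 0 (a21 * (1 - u * uᵀ)) 0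
      = (0 : Matrix (Fin n1 ⊕ Fin n2) (Fin n1 ⊕ Fin n2) ℝ) := by
    rw [← fromBlocks_zero]
    calc Matrix.fromBlocks (a11 * (1 - u * uᵀ)) 0 (a21 * (1 - u * uᵀ)) 0
        = a * Matrix.fromBlocks (1 - u * uᵀ) 0 0 0 := by
          rw [hfb, fromBlocks_multiply]; simp
      _ = Matrix.fromBlocks 0 0 0 0 := by rw [key, fromBlocks_zero]
  have h21p : a21 * (u * uᵀ) = a21 := by
    have := congrArg Matrix.toBlocks₂₁ key'
    rw [toBlocks_fromBlocks₂₁] at this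
    have h0 : a21 * (1 - u * uᵀ) = 0 := by
      rw [this]; rfl
    rw [Matrix.mul_sub, Matrix.mul_one, sub_eq_zero] at h0
    exact h0.symm
  -- computations of the sigma blocks
  have hsd : (Matrix.diagonal d) * lih = Matrix.diagonal fun i => Real.sqrt (d i) := by
    rw [diagonal_mul_diagonal, diagonal_eq_diagonal_iff.mpr
      (fun i => ?_)]
    show d i * (Real.sqrt (d i))⁻¹ = Real.sqrt (d i)
    rw [mul_inv_eq_iff_eq_mul₀ (hdne i), Real.mul_self_sqrt (le_of_lt (hd i))]
  have hσ11 : σ11 = u * Matrix.diagonal fun i => Real.sqrt (d i) := by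
    show a11 * u * lih = _
    rw [ha11, Matrix.mul_assoc (u * Matrix.diagonal d), hu, Matrix.mul_one,
      Matrix.mul_assoc, hsd]
  have hss : (Matrix.diagonal fun i => Real.sqrt (d i)) *
      (Matrix.diagonal fun i => Real.sqrt (d i)) = Matrix.diagonal d := by
    rw [diagonal_mul_diagonal]
    exact diagonal_eq_diagonal_iff.mpr fun i => Real.mul_self_sqrt (le_of_lt (hd i))
  have hsl : (Matrix.diagonal fun i => Real.sqrt (d i)) * lih = 1 := by
    show _ * Matrix.diagonal _ = _
    rw [diagonal_mul_diagonal, ← diagonal_one]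
    exact diagonal_eq_diagonal_iff.mpr fun i => mul_inv_cancel₀ (hdne i)
  have e11 : σ11 * σ11ᵀ = a11 := by
    rw [hσ11, transpose_mul, diagonal_transpose, Matrix.mul_assoc,
      ← Matrix.mul_assoc (Matrix.diagonal _), hss, ha11, Matrix.mul_assoc]
  have e21 : σ21 * σ11ᵀ = a21 := by
    show a21 * u * lih * _ = a21
    rw [hσ11, transpose_mul, diagonal_transpose, Matrix.mul_assoc (a21 * u),
      ← Matrix.mul_assoc lih, show lih * Matrix.diagonal (fun i => Real.sqrt (d i)) = 1 by
        show Matrix.diagonal _ * _ = _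
        rw [diagonal_mul_diagonal, ← diagonal_one]
        exact diagonal_eq_diagonal_iff.mpr fun i => inv_mul_cancel₀ (hdne i),
      Matrix.one_mul, Matrix.mul_assoc, h21p]
  have e12 : σ11 * σ21ᵀ = a12 := by
    have := congrArg Matrix.transpose e21
    rw [transpose_mul, transpose_transpose] at this
    rw [ha12, ← this]
  -- α is PSD
  have hll : lih * lihᵀ = Matrix.diagonal fun i => (d i)⁻¹ := by
    show Matrix.diagonal _ * (Matrix.diagonal _)ᵀ = _
    rw [diagonal_transpose, diagonal_mul_diagonal,
      diagonal_eq_diagonal_iff.mpr (fun i => ?_)]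
    show (Real.sqrt (d i))⁻¹ * (Real.sqrt (d i))⁻¹ = (d i)⁻¹
    rw [← mul_inv, Real.mul_self_sqrt (le_of_lt (hd i))]
  set g : Matrix (Fin n1) (Fin n1) ℝ := u * (Matrix.diagonal fun i => (d i)⁻¹) * uᵀ with hg
  have hd1 : (Matrix.diagonal fun i => (d i)⁻¹ * d i) = (1 : Matrix (Fin k) (Fin k) ℝ) := by
    rw [← diagonal_one]
    exact diagonal_eq_diagonal_iff.mpr fun i => inv_mul_cancel₀ (ne_of_gt (hd i))
  have hga11 : a21 * g * a11 = a21 := by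
    rw [Matrix.mul_assoc, hg, ha11]
    simp only [Matrix.mul_assoc]
    rw [← Matrix.mul_assoc uᵀ u, hu, Matrix.one_mul,
      ← Matrix.mul_assoc (Matrix.diagonal fun i => (d i)⁻¹), diagonal_mul_diagonal, hd1,
      Matrix.one_mul, ← Matrix.mul_assoc]
    rw [Matrix.mul_assoc, h21p]
  have hα : α = a22 - a21 * g * a12 := by
    show a22 - σ21 * σ21ᵀ = _
    congr 1
    show a21 * u * lih * (a21 * u * lih)ᵀ = _
    rw [transpose_mul, transpose_mul, Matrix.mul_assoc (a21 * u),
      ← Matrix.mul_assoc lih, hll, hg, ha12]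
    simp only [Matrix.mul_assoc]
  have hαpsd : α.PosSemidef := by
    set c : Matrix (Fin n1 ⊕ Fin n2) (Fin n1 ⊕ Fin n2) ℝ :=
      Matrix.fromBlocks 0 0 (-(a21 * g)) 1 with hc
    have hca : c * a = Matrix.fromBlocks 0 0 0 (a22 - a21 * g * a12) := by
      rw [hc, hfb, fromBlocks_multiply]
      simp only [Matrix.zero_mul, Matrix.one_mul, zero_add, add_zero,
        Matrix.neg_mul, hga11, neg_add_cancel]
      rw [neg_add_eq_sub]
    have hcomp : c * a * cᵀ = Matrix.fromBlocks 0 0 0 α := by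
      rw [hca, hc, fromBlocks_transpose, fromBlocks_multiply]
      simp only [Matrix.zero_mul, Matrix.mul_zero, zero_add, add_zero,
        Matrix.mul_one, transpose_zero, transpose_one, hα]
    have hpsd : (c * a * cᵀ).PosSemidef := by
      have := ha.mul_mul_conjTranspose_same c
      simpa using this
    rw [hcomp] at hpsd
    have hsub := hpsd.submatrix Sum.inr
    have heq : (Matrix.fromBlocks (0 : Matrix (Fin n1) (Fin n1) ℝ) 0 0 α).submatrix
        Sum.inr Sum.inr = α := by
      ext i j; rfl
    rwa [heq] at hsub
  refine ⟨hαpsd, ?_⟩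
  rw [fromBlocks_transpose, fromBlocks_multiply, fromBlocks_multiply]
  simp only [Matrix.mul_zero, Matrix.zero_mul, Matrix.mul_one, Matrix.one_mul,
    zero_add, add_zero, transpose_zero, transpose_one]
  rw [e11, e12, e21]
  have e22 : σ21 * σ21ᵀ + α = a22 := by
    show σ21 * σ21ᵀ + (a22 - σ21 * σ21ᵀ) = a22
    abel
  rw [e22]
  exact hfb
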